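/- For μ₁, μ₂ ∈ ℝ and σ₁, σ₂ > 0, let p_{μᵢ,σᵢ} be the normal densities with means μᵢ and standard deviations σᵢ. Then Onicescu's correlation coefficient satisfies ρ(p_{μ₁,σ₁}, p_{μ₂,σ₂}) = √(2σ₁σ₂/(σ₁²+σ₂²)) · exp(-(μ₁-μ₂)²/(2σ₁²+2σ₂²)), and the Cauchy–Schwarz divergence satisfies D_CS(p_{μ₁,σ₁}, p_{μ₂,σ₂}) = (μ₁-μ₂)²/(2σ₁²+2σ₂²) + (1/2)·log((1/2)·(σ₁/σ₂ + σ₂/σ₁)). -/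

import Mathlib

open MeasureTheory Real

/-- Density of the normal distribution with mean `μ` and standard deviation `σ`. -/
noncomputable def normalDensity (m s : ℝ) (x : ℝ) : ℝ :=
  (1 / (s * Real.sqrt (2 * Real.pi))) * Real.exp (-(x - m) ^ 2 / (2 * s ^ 2))

lemma gauss_shift (a c : ℝ) : ∫ x : ℝ, Real.exp (-a * (x - c)^2) = Real.sqrt (π / a) := by
  rw [← integral_gaussian a]
  exact MeasureTheory.integral_sub_right_eq_self (fun x => Real.exp (-a * x ^ 2)) c

lemma gauss_prod (m₁ m₂ s₁ s₂ : ℝ) (hs₁ : 0 < s₁) (hs₂ : 0 < s₂) :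
    ∫ x : ℝ, normalDensity m₁ s₁ x * normalDensity m₂ s₂ x
      = (1 / Real.sqrt (2 * π * (s₁^2 + s₂^2))) *
          Real.exp (-(m₁ - m₂)^2 / (2 * s₁^2 + 2 * s₂^2)) := by
  have hT : (0:ℝ) < s₁^2 + s₂^2 := by positivity
  set a : ℝ := (s₁^2 + s₂^2) / (2 * s₁^2 * s₂^2) with ha_def
  set c : ℝ := (m₁ * s₂^2 + m₂ * s₁^2) / (s₁^2 + s₂^2) with hc_def
  have ha : 0 < a := by positivity
  have step : ∀ x : ℝ, normalDensity m₁ s₁ x * normalDensity m₂ s₂ x =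
      ((1 / (s₁ * Real.sqrt (2 * π))) * (1 / (s₂ * Real.sqrt (2 * π))) *
        Real.exp (-(m₁ - m₂)^2 / (2 * s₁^2 + 2 * s₂^2))) * Real.exp (-a * (x - c)^2) := by
    intro x
    unfold normalDensity
    have hE : -(x-m₁)^2/(2*s₁^2) + -(x-m₂)^2/(2*s₂^2)
        = -(m₁-m₂)^2/(2*s₁^2+2*s₂^2) + -a*(x-c)^2 := by
      rw [ha_def, hc_def]; field_simp; ring
    rw [mul_mul_mul_comm, ← Real.exp_add, hE, Real.exp_add]; ring
  rw [MeasureTheory.integral_congr_ae (Filter.Eventually.of_forall step),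
    MeasureTheory.integral_const_mul, gauss_shift]
  have hsq : Real.sqrt (2*π) * Real.sqrt (2*π) = 2*π := Real.mul_self_sqrt (by positivity)
  have h1 : Real.sqrt (π / a) = s₁ * s₂ * Real.sqrt (2*π) / Real.sqrt (s₁^2 + s₂^2) := by
    have : π / a = (s₁ * s₂)^2 * ((2*π) / (s₁^2 + s₂^2)) := by
      rw [ha_def]; field_simp
    rw [this, Real.sqrt_mul (by positivity), Real.sqrt_sq (by positivity),
      Real.sqrt_div (by positivity), mul_div_assoc]
  rw [h1]
  have h2 : Real.sqrt (2 * π * (s₁^2 + s₂^2))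
      = Real.sqrt (2*π) * Real.sqrt (s₁^2 + s₂^2) := Real.sqrt_mul (by positivity) _
  rw [h2]
  have hπ : (0:ℝ) < Real.sqrt (2*π) := Real.sqrt_pos.mpr (by positivity)
  have hTs : (0:ℝ) < Real.sqrt (s₁^2 + s₂^2) := Real.sqrt_pos.mpr hT
  field_simp

lemma gauss_sq (m s : ℝ) (hs : 0 < s) :
    ∫ x : ℝ, (normalDensity m s x)^2 = 1 / (2 * s * Real.sqrt π) := by
  have h := gauss_prod m m s s hs hs
  simp_rw [← sq] at h
  rw [h]
  have h2 : (2 * s * Real.sqrt π)^2 = 2 * π * (s^2 + s^2) := by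
    rw [mul_pow, mul_pow, sq_sqrt pi_pos.le]; ring
  rw [← h2, Real.sqrt_sq (by positivity)]
  simp

/-- Onicescu's correlation coefficient and the Cauchy–Schwarz divergence between two
univariate normal densities. -/
theorem onicescu_correlation_cauchySchwarz_normal (m₁ m₂ : ℝ) (s₁ s₂ : ℝ)
    (hs₁ : 0 < s₁) (hs₂ : 0 < s₂) :
    ((∫ x : ℝ, normalDensity m₁ s₁ x * normalDensity m₂ s₂ x) /
        Real.sqrt ((∫ x : ℝ, (normalDensity m₁ s₁ x) ^ 2) *
          (∫ x : ℝ, (normalDensity m₂ s₂ x) ^ 2))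
      = Real.sqrt (2 * s₁ * s₂ / (s₁ ^ 2 + s₂ ^ 2)) *
          Real.exp (-(m₁ - m₂) ^ 2 / (2 * s₁ ^ 2 + 2 * s₂ ^ 2))) ∧
    -Real.log ((∫ x : ℝ, normalDensity m₁ s₁ x * normalDensity m₂ s₂ x) /
        Real.sqrt ((∫ x : ℝ, (normalDensity m₁ s₁ x) ^ 2) *
          (∫ x : ℝ, (normalDensity m₂ s₂ x) ^ 2)))
      = (m₁ - m₂) ^ 2 / (2 * s₁ ^ 2 + 2 * s₂ ^ 2) +
          (1 / 2) * Real.log ((1 / 2) * (s₁ / s₂ + s₂ / s₁)) := by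
  have hT : (0:ℝ) < s₁^2 + s₂^2 := by positivity
  have hπ : (0:ℝ) < Real.sqrt π := Real.sqrt_pos.mpr pi_pos
  have hππ : Real.sqrt π * Real.sqrt π = π := Real.mul_self_sqrt pi_pos.le
  have key : (1 / Real.sqrt (2 * π * (s₁^2 + s₂^2))) /
      Real.sqrt ((1 / (2 * s₁ * Real.sqrt π)) * (1 / (2 * s₂ * Real.sqrt π)))
      = Real.sqrt (2 * s₁ * s₂ / (s₁^2 + s₂^2)) := by
    rw [one_div, ← Real.sqrt_inv, ← Real.sqrt_div (by positivity)]
    congr 1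
    field_simp
    linear_combination hππ
  have h1 : (∫ x : ℝ, normalDensity m₁ s₁ x * normalDensity m₂ s₂ x) /
        Real.sqrt ((∫ x : ℝ, (normalDensity m₁ s₁ x) ^ 2) *
          (∫ x : ℝ, (normalDensity m₂ s₂ x) ^ 2))
      = Real.sqrt (2 * s₁ * s₂ / (s₁ ^ 2 + s₂ ^ 2)) *
          Real.exp (-(m₁ - m₂) ^ 2 / (2 * s₁ ^ 2 + 2 * s₂ ^ 2)) := by
    rw [gauss_prod m₁ m₂ s₁ s₂ hs₁ hs₂, gauss_sq m₁ s₁ hs₁, gauss_sq m₂ s₂ hs₂,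
      mul_comm, mul_div_assoc, key, mul_comm]
  refine ⟨h1, ?_⟩
  rw [h1]
  have hu : (0:ℝ) < 2 * s₁ * s₂ / (s₁^2 + s₂^2) := by positivity
  rw [Real.log_mul (by positivity) (Real.exp_ne_zero _), Real.log_exp,
    Real.log_sqrt hu.le]
  have h3 : ((1:ℝ)/2) * (s₁/s₂ + s₂/s₁) = (2 * s₁ * s₂ / (s₁^2 + s₂^2))⁻¹ := by
    field_simp
  rw [h3, Real.log_inv]
  ring
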